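/- For every C > 0, every β ∈ ℂ with Re(β) > 0, every ε > 0 and every k ∈ ℕ, there exists a lower-upper pair of type (β,ε,k) (with some t > exp^∘k(0) and functions h_l, h_u : [t,∞) → ℝ) such that the associated set D_{h_l,h_u} is contained in the standard quadratic domain R_C. -/

import Mathlib

open Filter Set

/-- The standard quadratic domain `R_C`, i.e. the image of the right half-plane
under `ζ ↦ ζ + C·(ζ+1)^{1/2}` (principal branch). -/
noncomputable def sqd (C : ℝ) : Set ℂ :=
  (fun ζ : ℂ => ζ + (C : ℂ) * (ζ + 1) ^ ((1 : ℂ) / 2)) '' {ζ : ℂ | 0 < ζ.re}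

/-- `M_{ε,k}(x) = (∏_{j=0}^{k-1} log^∘j(x))⁻¹ · (log^∘k(x))^{-(1+ε)}`. -/
noncomputable def Mfun (ε : ℝ) (k : ℕ) (x : ℝ) : ℝ :=
  (∏ j ∈ Finset.range k, Real.log^[j] x)⁻¹ * (Real.log^[k] x) ^ (-(1 + ε))

/-- `(t, hl, hu)` is a lower-upper pair of type `(β, ε, k)`. -/
def IsLUPair (β : ℂ) (ε : ℝ) (k : ℕ) (t : ℝ) (hl hu : ℝ → ℝ) : Prop :=
  Real.exp^[k] 0 < t ∧
  (∀ x, t ≤ x → 0 < β.re - Mfun ε k x) ∧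
  (∀ x, t ≤ x → hl x < hu x) ∧
  (0 < β.im →
    (∀ x, t ≤ x → 0 < β.im - Mfun ε k x) ∧
    (AntitoneOn hl (Set.Ici t) ∨
      (MonotoneOn hl (Set.Ici t) ∧
        ∀ x, t ≤ x → hl (x + (β.re + Mfun ε k x)) - hl x ≤ β.im - Mfun ε k x)) ∧
    MonotoneOn hu (Set.Ici t) ∧
    (∀ x, t ≤ x → β.im + Mfun ε k x ≤ hu (x + (β.re - Mfun ε k x)) - hu x)) ∧
  (β.im = 0 →
    AntitoneOn hl (Set.Ici t) ∧
    (∀ x, t ≤ x → hl (x + (β.re - Mfun ε k x)) - hl x ≤ -(Mfun ε k x)) ∧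
    MonotoneOn hu (Set.Ici t) ∧
    (∀ x, t ≤ x → Mfun ε k x ≤ hu (x + (β.re - Mfun ε k x)) - hu x)) ∧
  (β.im < 0 →
    (∀ x, t ≤ x → 0 < -β.im - Mfun ε k x) ∧
    AntitoneOn hl (Set.Ici t) ∧
    (∀ x, t ≤ x → hl (x + (β.re - Mfun ε k x)) - hl x ≤ β.im - Mfun ε k x) ∧
    (MonotoneOn hu (Set.Ici t) ∨
      (AntitoneOn hu (Set.Ici t) ∧
        ∀ x, t ≤ x → β.im + Mfun ε k x ≤ hu (x + (β.re + Mfun ε k x)) - hu x))) 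

/-- The set `D_{h_l,h_u}` associated with a lower-upper pair. -/

private lemma log_iter_tendsto (j : ℕ) : Tendsto (Real.log^[j]) atTop atTop := by
  induction j with
  | zero => simpa using tendsto_id
  | succ n ih =>
    rw [Function.iterate_succ']
    exact Real.tendsto_log_atTop.comp ih

private lemma Mfun_tendsto (ε : ℝ) (hε : 0 < ε) (k : ℕ) :
    Tendsto (Mfun ε k) atTop (nhds 0) := by
  have h1 : ∀ᶠ x in atTop, ∀ j ∈ Finset.range k, (1:ℝ) ≤ Real.log^[j] x := by
    rw [eventually_all_finset]
    exact fun j _ => (log_iter_tendsto j).eventually_ge_atTop 1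
  have h2 : ∀ᶠ x in atTop, (1:ℝ) ≤ Real.log^[k] x :=
    (log_iter_tendsto k).eventually_ge_atTop 1
  have hg : Tendsto (fun x => (Real.log^[k] x) ^ (-(1 + ε))) atTop (nhds 0) :=
    (tendsto_rpow_neg_atTop (by linarith)).comp (log_iter_tendsto k)
  refine tendsto_of_tendsto_of_tendsto_of_le_of_le' tendsto_const_nhds hg ?_ ?_
  · filter_upwards [h1, h2] with x hx hxk
    have hp : (1:ℝ) ≤ ∏ j ∈ Finset.range k, Real.log^[j] x := by
      calc (1:ℝ) = ∏ _j ∈ Finset.range k, (1:ℝ) := by simp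
        _ ≤ _ := Finset.prod_le_prod (by simp) hx
    have : 0 ≤ (Real.log^[k] x) ^ (-(1 + ε)) := Real.rpow_nonneg (by linarith) _
    exact mul_nonneg (inv_nonneg.2 (by linarith)) this
  · filter_upwards [h1, h2] with x hx hxk
    have hp : (1:ℝ) ≤ ∏ j ∈ Finset.range k, Real.log^[j] x := by
      calc (1:ℝ) = ∏ _j ∈ Finset.range k, (1:ℝ) := by simp
        _ ≤ _ := Finset.prod_le_prod (by simp) hx
    have h0 : 0 ≤ (Real.log^[k] x) ^ (-(1 + ε)) := Real.rpow_nonneg (by linarith) _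
    calc (∏ j ∈ Finset.range k, Real.log^[j] x)⁻¹ * (Real.log^[k] x) ^ (-(1 + ε))
        ≤ 1 * (Real.log^[k] x) ^ (-(1 + ε)) := by
          gcongr
          exact inv_le_one_of_one_le₀ hp
      _ = _ := one_mul _

private lemma mem_sqd (C : ℝ) (hC : 0 < C) (a : ℝ) (ha : 0 < a) (w : ℂ)
    (hx1 : 1 ≤ w.re) (hxK : C^2*(C^2+8+2*a)/4 < w.re) (hy : |w.im| ≤ a * w.re) :
    w ∈ sqd C := by
  set x := w.re with hx_def
  have hx0 : 0 < x := by linarith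
  set z : ℂ := (C:ℂ)^2 + 4*(w+1) with hz_def
  have hzre : z.re = C^2 + 4*x + 4 := by
    simp [hz_def, Complex.add_re, Complex.mul_re, pow_two, Complex.mul_im]
    ring
  have hzim : z.im = 4 * w.im := by
    simp [hz_def, Complex.add_im, Complex.mul_im, pow_two, Complex.mul_re]
  set S : ℂ := z ^ ((2:ℂ)⁻¹) with hS_def
  have hS2 : S ^ 2 = z := Complex.cpow_ofNat_inv_pow z 2
  have hSre : S.re = Real.sqrt ((‖z‖ + z.re)/2) := Complex.cpow_inv_two_re z
  have hzre_pos : 0 < z.re := by rw [hzre]; positivity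
  have habs_ge : z.re ≤ ‖z‖ := Complex.re_le_norm z
  have hSre_ge : Real.sqrt (z.re) ≤ S.re := by
    rw [hSre]
    exact Real.sqrt_le_sqrt (by linarith)
  have hSreC : C < S.re := by
    have h1 : Real.sqrt (C^2) < Real.sqrt (z.re) := by
      apply Real.sqrt_lt_sqrt (by positivity)
      rw [hzre]; linarith
    rw [Real.sqrt_sq hC.le] at h1
    linarith
  have habs_le : ‖z‖ ≤ |z.re| + |z.im| := Complex.norm_le_abs_re_add_abs_im z
  set K : ℝ := C^2 + 8 + 2*a with hK_def
  have hK0 : 0 < K := by positivity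
  have hSre_le : S.re ≤ Real.sqrt (K * x) := by
    rw [hSre]
    apply Real.sqrt_le_sqrt
    have h2 : |z.im| ≤ 4 * (a * x) := by
      rw [hzim, abs_mul]
      norm_num
      linarith [hy]
    have habs_le2 : ‖z‖ ≤ (C^2+4*x+4) + 4*(a*x) := by
      rw [abs_of_pos hzre_pos] at habs_le
      rw [hzre] at habs_le
      linarith
    rw [hzre]
    nlinarith [hK_def, hx1, hx0, ha]
  set s : ℝ := Real.sqrt (K * x) with hs_def
  have hs0 : 0 ≤ s := Real.sqrt_nonneg _
  have hs2 : s^2 = K * x := Real.sq_sqrt (by positivity)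
  have hCs : C * s < 2 * x := by
    by_contra hcon
    push_neg at hcon
    have h4 : (2*x)^2 ≤ (C*s)^2 := by nlinarith [mul_nonneg hC.le hs0]
    have h5 : (C*s)^2 = C^2*(K*x) := by rw [mul_pow, hs2]
    nlinarith [h4, h5, mul_lt_mul_of_pos_right hxK hx0]
  set u : ℂ := (S - C)/2 with hu_def
  have hure : u.re = (S.re - C)/2 := by
    rw [hu_def]
    simp [Complex.div_re, Complex.normSq]
  have hure_pos : 0 < u.re := by rw [hure]; linarith
  refine ⟨w - (C:ℂ) * u, ?_, ?_⟩
  · show 0 < (w - (C:ℂ) * u).re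
    have : (w - (C:ℂ) * u).re = x - C * u.re := by
      simp [Complex.sub_re, Complex.mul_re, hx_def]
    rw [this, hure]
    have : C * S.re ≤ C * s := mul_le_mul_of_nonneg_left hSre_le hC.le
    nlinarith
  · show w - (C:ℂ) * u + (C:ℂ) * (w - (C:ℂ) * u + 1) ^ ((1:ℂ)/2) = w
    have husq : w - (C:ℂ) * u + 1 = u^2 := by
      rw [hu_def]
      linear_combination (-hS2 - hz_def)/4
    rw [husq]
    have hsqrt : (u^2) ^ ((1:ℂ)/2) = u := by
      rw [one_div]
      exact Complex.sq_cpow_two_inv hure_pos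
    rw [hsqrt]
    ring

def DSet (t : ℝ) (hl hu : ℝ → ℝ) : Set ℂ :=
  {ζ : ℂ | t ≤ ζ.re ∧ hl ζ.re < ζ.im ∧ ζ.im < hu ζ.re}

theorem standard_quadratic_domain_is_admissible
    (C : ℝ) (hC : 0 < C) (β : ℂ) (hβ : 0 < β.re) (ε : ℝ) (hε : 0 < ε) (k : ℕ) :
    ∃ (t : ℝ) (hl hu : ℝ → ℝ),
      IsLUPair β ε k t hl hu ∧ DSet t hl hu ⊆ sqd C := by
  set a : ℝ := 2*(|β.im| + 1)/β.re with ha_def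
  have ha : 0 < a := by positivity
  have ha1 : 0 < a + 1 := by linarith
  have har : a * β.re = 2*(|β.im| + 1) := div_mul_cancel₀ _ (ne_of_gt hβ)
  set m : ℝ := min (1/(a+1)) (min (β.re/2) (if β.im = 0 then 1 else |β.im|/2)) with hm_def
  have hm : 0 < m := by
    refine lt_min (by positivity) (lt_min (by positivity) ?_)
    split_ifs with h
    · norm_num
    · have : 0 < |β.im| := abs_pos.mpr h
      linarith
  have hev : ∀ᶠ x in atTop, |Mfun ε k x| < m := by
    have h := (Mfun_tendsto ε hε k).eventually (Metric.ball_mem_nhds (0:ℝ) hm)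
    filter_upwards [h] with x hx
    simpa [Real.dist_eq] using hx
  obtain ⟨t₀, ht₀⟩ := eventually_atTop.mp hev
  set t : ℝ := max t₀ (max (C^2*(C^2+8+2*a)/4 + 1) (max 1 (Real.exp^[k] 0 + 1))) with ht_def
  have ht1 : (1:ℝ) ≤ t :=
    le_trans (le_max_left 1 _) (le_trans (le_max_right _ _) (le_max_right _ _))
  have htK : C^2*(C^2+8+2*a)/4 < t :=
    lt_of_lt_of_le (lt_add_one _) (le_trans (le_max_left _ _) (le_max_right _ _))
  have hte : Real.exp^[k] 0 < t :=
    lt_of_lt_of_le (lt_add_one _)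
      (le_trans (le_max_right 1 _) (le_trans (le_max_right _ _) (le_max_right _ _)))
  have htM : ∀ x, t ≤ x → |Mfun ε k x| < m := fun x hx =>
    ht₀ x (le_trans (le_max_left _ _) hx)
  have hm1 : m ≤ 1/(a+1) := min_le_left _ _
  have hm2 : m ≤ β.re/2 := le_trans (min_le_right _ _) (min_le_left _ _)
  have hm3 : m ≤ (if β.im = 0 then 1 else |β.im|/2) :=
    le_trans (min_le_right _ _) (min_le_right _ _)
  -- key bounds for x ≥ t
  have key : ∀ x, t ≤ x → (a+1) * Mfun ε k x < 1 ∧ -1 < (a+1) * Mfun ε k x ∧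
      Mfun ε k x < β.re/2 ∧ -(β.re/2) < Mfun ε k x := by
    intro x hx
    have hM := htM x hx
    obtain ⟨hMl, hMu⟩ := abs_lt.mp hM
    have h1 : (a+1) * |Mfun ε k x| < (a+1) * m := by
      exact mul_lt_mul_of_pos_left hM ha1
    have h2 : (a+1) * m ≤ 1 := by
      have := mul_le_mul_of_nonneg_left hm1 ha1.le
      rwa [mul_one_div, div_self (ne_of_gt ha1)] at this
    have h3 : (a+1) * Mfun ε k x ≤ (a+1) * |Mfun ε k x| :=
      mul_le_mul_of_nonneg_left (le_abs_self _) ha1.le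
    have h4 : -((a+1) * Mfun ε k x) ≤ (a+1) * |Mfun ε k x| := by
      rw [← mul_neg]
      exact mul_le_mul_of_nonneg_left (neg_le_abs _) ha1.le
    exact ⟨by linarith, by linarith, by linarith, by linarith⟩
  have hmono : MonotoneOn (fun x : ℝ => a * x) (Set.Ici t) :=
    fun p _ q _ hpq => mul_le_mul_of_nonneg_left hpq ha.le
  have hanti : AntitoneOn (fun x : ℝ => -(a * x)) (Set.Ici t) :=
    fun p _ q _ hpq => neg_le_neg (mul_le_mul_of_nonneg_left hpq ha.le)
  refine ⟨t, fun x => -(a * x), fun x => a * x, ⟨hte, ?_, ?_, ?_, ?_, ?_⟩, ?_⟩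
  · intro x hx
    obtain ⟨_, _, h3, _⟩ := key x hx
    linarith
  · intro x hx
    have hx0 : 0 < x := lt_of_lt_of_le (by linarith) hx
    have : 0 < a * x := mul_pos ha hx0
    show -(a * x) < a * x
    linarith
  · -- Im β > 0
    intro hb
    have hb' : β.im ≠ 0 := ne_of_gt hb
    rw [if_neg hb'] at hm3
    have habs : |β.im| = β.im := abs_of_pos hb
    refine ⟨?_, Or.inl hanti, hmono, ?_⟩
    · intro x hx
      have hM := htM x hx
      obtain ⟨hMl, hMu⟩ := abs_lt.mp hM
      rw [habs] at hm3
      linarith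
    · intro x hx
      obtain ⟨h1, h2, _, _⟩ := key x hx
      show β.im + Mfun ε k x ≤ a * (x + (β.re - Mfun ε k x)) - a * x
      rw [habs] at har
      nlinarith [h1, h2, har, hb]
  · -- Im β = 0
    intro hb
    have habs : |β.im| = 0 := by rw [hb, abs_zero]
    rw [habs] at har
    refine ⟨hanti, ?_, hmono, ?_⟩
    · intro x hx
      obtain ⟨h1, h2, _, _⟩ := key x hx
      show -(a * (x + (β.re - Mfun ε k x))) - -(a * x) ≤ -(Mfun ε k x)
      nlinarith [h1, h2, har]
    · intro x hx
      obtain ⟨h1, h2, _, _⟩ := key x hx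
      show Mfun ε k x ≤ a * (x + (β.re - Mfun ε k x)) - a * x
      nlinarith [h1, h2, har]
  · -- Im β < 0
    intro hb
    have hb' : β.im ≠ 0 := ne_of_lt hb
    rw [if_neg hb'] at hm3
    have habs : |β.im| = -β.im := abs_of_neg hb
    rw [habs] at har hm3
    refine ⟨?_, hanti, ?_, Or.inl hmono⟩
    · intro x hx
      have hM := htM x hx
      obtain ⟨hMl, hMu⟩ := abs_lt.mp hM
      linarith
    · intro x hx
      obtain ⟨h1, h2, _, _⟩ := key x hx
      show -(a * (x + (β.re - Mfun ε k x))) - -(a * x) ≤ β.im - Mfun ε k x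
      nlinarith [h1, h2, har, hb]
  · -- D ⊆ sqd C
    intro w hw
    obtain ⟨hw1, hw2, hw3⟩ := hw
    have hw2' : -(a * w.re) < w.im := hw2
    have hw3' : w.im < a * w.re := hw3
    refine mem_sqd C hC a ha w (le_trans ht1 hw1) (lt_of_lt_of_le htK hw1) ?_
    exact le_of_lt (abs_lt.mpr ⟨by linarith, hw3'⟩)
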